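/- Let Y₀ be a distribution on {0,1}^{n+m} jointly distributed with fixed marginal Z such that Y₀|Z=z is flat at level 2^{-k} (each conditional probability is either 2^{-k} or 0). Then a real-valued function D' lies in the normal cone of the set 𝒴 = {P_{Y,Z} : H_∞(Y|Z) ≥ k, Y has marginal Z} at P_{Y₀,Z} if and only if D'(x₁,z) ≥ D'(x₂,z) for every z and every x₁, x₂ with P_{Y₀|Z=z}(x₁) = 2^{-k} and P_{Y₀|Z=z}(x₂) = 0. -/

import Mathlib

open Finset

/-- Characterization of the normal cone of the polytope
`𝒴 = {p ≥ 0 : ∑_x p(x,z) = P_Z(z), p(x,z) ≤ 2^{-k}P_Z(z)}` at a flat point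
`p₀`: a function `D'` lies in the normal cone at `p₀` iff
`D'(x₁,z) ≥ D'(x₂,z)` whenever `P_{Y₀|Z=z}(x₁) = 2^{-k}` and
`P_{Y₀|Z=z}(x₂) = 0`. -/
theorem stmt18 {α β : Type*} [Fintype α] [Fintype β] (k : ℝ)
    (PZ : β → ℝ) (hPZ0 : ∀ z, 0 ≤ PZ z) (hPZ1 : ∑ z, PZ z = 1)
    (𝒴 : Set (α → β → ℝ))
    (h𝒴 : 𝒴 = {p | (∀ x z, 0 ≤ p x z) ∧ (∀ z, ∑ x, p x z = PZ z) ∧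
      (∀ x z, p x z ≤ (2 : ℝ) ^ (-k) * PZ z)})
    (p₀ : α → β → ℝ) (hp₀ : p₀ ∈ 𝒴)
    (hflat : ∀ x z, p₀ x z = (2 : ℝ) ^ (-k) * PZ z ∨ p₀ x z = 0)
    (D' : α → β → ℝ) :
    (∀ p ∈ 𝒴, ∑ x, ∑ z, D' x z * p x z ≤ ∑ x, ∑ z, D' x z * p₀ x z) ↔
    (∀ z, 0 < PZ z → ∀ x₁ x₂,
      p₀ x₁ z = (2 : ℝ) ^ (-k) * PZ z → p₀ x₂ z = 0 → D' x₂ z ≤ D' x₁ z) := by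
  classical
  subst h𝒴
  obtain ⟨hp₀n, hp₀s, hp₀b⟩ := hp₀
  have h2k : (0:ℝ) < (2:ℝ) ^ (-k) := Real.rpow_pos_of_pos two_pos _
  constructor
  · intro h z hz x₁ x₂ h1 h2
    set c : ℝ := (2:ℝ) ^ (-k) * PZ z with hcdef
    have hc : 0 < c := mul_pos h2k hz
    have hne : x₁ ≠ x₂ := by
      intro he; rw [he, h2] at h1; exact absurd h1.symm hc.ne'
    set p : α → β → ℝ := fun x w =>
      p₀ x w + ((if x = x₂ then (1:ℝ) else 0) - (if x = x₁ then 1 else 0)) *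
        (if w = z then c else 0) with hpdef
    have hpmem : p ∈ {p : α → β → ℝ | (∀ x z, 0 ≤ p x z) ∧ (∀ z, ∑ x, p x z = PZ z) ∧
      (∀ x z, p x z ≤ (2 : ℝ) ^ (-k) * PZ z)} := by
      refine ⟨?_, ?_, ?_⟩
      · intro x w
        simp only [hpdef]
        by_cases hw : w = z
        · subst hw
          by_cases hx2 : x = x₂
          · subst hx2
            rw [if_pos rfl, if_neg (Ne.symm hne), if_pos rfl, h2]
            linarith [hc.le]
          · by_cases hx1 : x = x₁
            · subst hx1
              rw [if_neg hx2, if_pos rfl, if_pos rfl, h1]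
              linarith
            · rw [if_neg hx2, if_neg hx1]
              have := hp₀n x w
              linarith
        · rw [if_neg hw, mul_zero, add_zero]
          exact hp₀n x w
      · intro w
        simp only [hpdef, Finset.sum_add_distrib, sub_mul, ite_mul, one_mul, zero_mul,
          Finset.sum_sub_distrib, Finset.sum_ite_eq', Finset.mem_univ, if_true, hp₀s]
        ring
      · intro x w
        simp only [hpdef]
        by_cases hw : w = z
        · subst hw
          by_cases hx2 : x = x₂
          · subst hx2
            rw [if_pos rfl, if_neg (Ne.symm hne), if_pos rfl, h2]
            linarith
          · by_cases hx1 : x = x₁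
            · subst hx1
              rw [if_neg hx2, if_pos rfl, if_pos rfl, h1]
              linarith
            · rw [if_neg hx2, if_neg hx1]
              have := hp₀b x w
              linarith
        · rw [if_neg hw, mul_zero, add_zero]
          exact hp₀b x w
    have hkey := h p hpmem
    have hsum : ∑ x, ∑ w, D' x w * p x w =
        (∑ x, ∑ w, D' x w * p₀ x w) + c * D' x₂ z - c * D' x₁ z := by
      simp only [hpdef, mul_add, Finset.sum_add_distrib, mul_ite, mul_zero, mul_sub,
        ite_mul, one_mul, zero_mul, sub_mul, Finset.sum_sub_distrib,
        Finset.sum_ite_eq', Finset.mem_univ, if_true]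
      ring
    rw [hsum] at hkey
    have : c * D' x₂ z ≤ c * D' x₁ z := by linarith
    exact le_of_mul_le_mul_left this hc
  · intro h p hp
    obtain ⟨hpn, hps, hpb⟩ := hp
    have hzle : ∀ z, ∑ x, D' x z * p x z ≤ ∑ x, D' x z * p₀ x z := by
      intro z
      by_cases hz : PZ z = 0
      · have hpz : ∀ x, p x z = 0 := fun x =>
          le_antisymm (by have := hpb x z; rw [hz, mul_zero] at this; exact this) (hpn x z)
        have hp₀z : ∀ x, p₀ x z = 0 := fun x =>
          le_antisymm (by have := hp₀b x z; rw [hz, mul_zero] at this; exact this) (hp₀n x z)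
        simp [hpz, hp₀z]
      · have hz' : 0 < PZ z := (hPZ0 z).lt_of_ne (Ne.symm hz)
        set c : ℝ := (2:ℝ) ^ (-k) * PZ z with hcdef
        have hc : 0 < c := mul_pos h2k hz'
        set S : Finset α := univ.filter fun x => p₀ x z = c with hSdef
        have hS : S.Nonempty := by
          by_contra hSe
          rw [Finset.not_nonempty_iff_eq_empty] at hSe
          have hall : ∀ x, p₀ x z = 0 := by
            intro x
            rcases hflat x z with hx | hx
            · exfalso
              have : x ∈ S := by simp [hSdef, hx, hcdef]
              rw [hSe] at this; exact absurd this (Finset.notMem_empty x)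
            · exact hx
          have := hp₀s z
          simp [hall] at this
          exact hz this.symm
        obtain ⟨x₀, hx₀S, hx₀min⟩ := S.exists_min_image (fun x => D' x z) hS
        have hx₀c : p₀ x₀ z = c := (Finset.mem_filter.mp hx₀S).2
        have hterm : ∀ x, D' x₀ z * (p₀ x z - p x z) ≤ D' x z * (p₀ x z - p x z) := by
          intro x
          rcases hflat x z with hx | hx
          · have hxS : x ∈ S := by simp [hSdef, hx, hcdef]
            have hle : D' x₀ z ≤ D' x z := hx₀min x hxS
            have hd : 0 ≤ p₀ x z - p x z := by
              have := hpb x z; rw [hx]; linarith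
            nlinarith
          · have hle : D' x z ≤ D' x₀ z := h z hz' x₀ x hx₀c hx
            have hd : p₀ x z - p x z ≤ 0 := by
              have := hpn x z; rw [hx]; linarith
            nlinarith
        have hsum0 : ∑ x, D' x₀ z * (p₀ x z - p x z) = 0 := by
          rw [← Finset.mul_sum, Finset.sum_sub_distrib, hps, hp₀s, sub_self, mul_zero]
        have := Finset.sum_le_sum (fun x (_ : x ∈ (univ : Finset α)) => hterm x)
        rw [hsum0] at this
        have hexp : ∑ x, D' x z * (p₀ x z - p x z) =
            ∑ x, D' x z * p₀ x z - ∑ x, D' x z * p x z := by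
          rw [← Finset.sum_sub_distrib]; exact Finset.sum_congr rfl fun x _ => by ring
        rw [hexp] at this
        linarith
    calc ∑ x, ∑ z, D' x z * p x z = ∑ z, ∑ x, D' x z * p x z := Finset.sum_comm
      _ ≤ ∑ z, ∑ x, D' x z * p₀ x z := Finset.sum_le_sum fun z _ => hzle z
      _ = ∑ x, ∑ z, D' x z * p₀ x z := Finset.sum_comm
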